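/- Let (γ, n₁, n₂) be a non-parabolic spatial hybrid framed curve with Frenet formulas n₁' = Ln₂ + Mμ, n₂' = -δ₁δ₂Ln₁, μ' = -σδ₁δ₂Mn₁, γ' = αμ. Define the involute Inv_γ(t) = γ(t) + f₁(t)n₁(t) + f₂(t)μ(t), where f₁' = σδ₁δ₂Mf₂ and f₂' = -Mf₁ - α. Then Inv_γ'(t) = f₁(t)L(t)n₂(t); in particular (Inv_γ, n₁, μ) is a non-parabolic spatial hybrid framed curve. -/
import Mathlib


open Real Matrix

noncomputable section

/-- Scalar product on the spatial hybrid number space, coordinates (b,c,d). -/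
def g (x y : Fin 3 → ℝ) : ℝ := x 0 * y 0 - x 0 * y 1 - y 0 * x 1 - x 2 * y 2

/-- Hybridian product of g-orthogonal spatial hybrid numbers. -/
def hprod (x y : Fin 3 → ℝ) : Fin 3 → ℝ :=
  ![x 0 * y 2 - y 0 * x 2, x 0 * y 2 - y 0 * x 2 - x 1 * y 2 + y 1 * x 2,
    y 0 * x 1 - x 0 * y 1]

/-- Gram matrix of g. -/
def Gmat : Matrix (Fin 3) (Fin 3) ℝ := !![1, -1, 0; -1, 0, 0; 0, 0, -1]

/-- The involute Inv_γ = γ + f₁n₁ + f₂μ satisfies Inv_γ' = f₁ L n₂, so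
(Inv_γ, n₁, μ) is a non-parabolic spatial hybrid framed curve. -/
theorem stmt11 (γ n₁ n₂ μ : ℝ → Fin 3 → ℝ) (L M α f₁ f₂ : ℝ → ℝ)
    (σ δ₁ δ₂ : ℝ)
    (hσ : σ = 1 ∨ σ = -1) (hδ₁ : δ₁ = 1 ∨ δ₁ = -1) (hδ₂ : δ₂ = 1 ∨ δ₂ = -1)
    (hμ : ∀ t, μ t = hprod (n₁ t) (n₂ t))
    (hg₁ : ∀ t, g (n₁ t) (n₁ t) = σ) (hg₂ : ∀ t, g (n₂ t) (n₂ t) = σ * δ₁ * δ₂)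
    (hg₁₂ : ∀ t, g (n₁ t) (n₂ t) = 0)
    (hγd : Differentiable ℝ γ) (hn₁d : Differentiable ℝ n₁)
    (hn₂d : Differentiable ℝ n₂) (hf₁d : Differentiable ℝ f₁)
    (hf₂d : Differentiable ℝ f₂)
    (hF₁ : ∀ t, deriv n₁ t = L t • n₂ t + M t • μ t)
    (hF₂ : ∀ t, deriv n₂ t = (-(δ₁ * δ₂) * L t) • n₁ t)
    (hFμ : ∀ t, deriv μ t = (-(σ * δ₁ * δ₂) * M t) • n₁ t)
    (hγ' : ∀ t, deriv γ t = α t • μ t)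
    (hf₁ : ∀ t, deriv f₁ t = σ * δ₁ * δ₂ * M t * f₂ t)
    (hf₂ : ∀ t, deriv f₂ t = -(M t * f₁ t) - α t)
    (Inv : ℝ → Fin 3 → ℝ)
    (hInv : ∀ t, Inv t = γ t + f₁ t • n₁ t + f₂ t • μ t) :
    ∀ t, deriv Inv t = (f₁ t * L t) • n₂ t ∧
      g (deriv Inv t) (n₁ t) = 0 ∧ g (deriv Inv t) (μ t) = 0 := by
  -- μ is differentiable
  have hμd : Differentiable ℝ μ := by
    have heq : μ = fun t => hprod (n₁ t) (n₂ t) := funext hμ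
    rw [heq]
    have h1 := fun i => (differentiable_pi.mp hn₁d) i
    have h2 := fun i => (differentiable_pi.mp hn₂d) i
    apply differentiable_pi.mpr
    intro i
    fin_cases i
    · show Differentiable ℝ fun x => n₁ x 0 * n₂ x 2 - n₂ x 0 * n₁ x 2
      fun_prop
    · show Differentiable ℝ fun x =>
        n₁ x 0 * n₂ x 2 - n₂ x 0 * n₁ x 2 - n₁ x 1 * n₂ x 2 + n₂ x 1 * n₁ x 2
      fun_prop
    · show Differentiable ℝ fun x => n₂ x 0 * n₁ x 1 - n₁ x 0 * n₂ x 1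
      fun_prop
  intro t
  have key : deriv Inv t = (f₁ t * L t) • n₂ t := by
    have hInvEq : Inv = fun t => γ t + f₁ t • n₁ t + f₂ t • μ t := funext hInv
    have hγ : HasDerivAt γ (α t • μ t) t := (hγ' t) ▸ (hγd t).hasDerivAt
    have hn₁ : HasDerivAt n₁ (L t • n₂ t + M t • μ t) t := (hF₁ t) ▸ (hn₁d t).hasDerivAt
    have hμ' : HasDerivAt μ ((-(σ * δ₁ * δ₂) * M t) • n₁ t) t := (hFμ t) ▸ (hμd t).hasDerivAt
    have hf₁' : HasDerivAt f₁ (σ * δ₁ * δ₂ * M t * f₂ t) t := (hf₁ t) ▸ (hf₁d t).hasDerivAt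
    have hf₂' : HasDerivAt f₂ (-(M t * f₁ t) - α t) t := (hf₂ t) ▸ (hf₂d t).hasDerivAt
    have H : HasDerivAt Inv (α t • μ t + (f₁ t • (L t • n₂ t + M t • μ t)
        + (σ * δ₁ * δ₂ * M t * f₂ t) • n₁ t)
        + (f₂ t • (-(σ * δ₁ * δ₂) * M t) • n₁ t + (-(M t * f₁ t) - α t) • μ t)) t := by
      rw [hInvEq]
      exact (hγ.add (hf₁'.smul hn₁)).add (hf₂'.smul hμ')
    rw [H.deriv]
    module
  refine ⟨key, ?_, ?_⟩
  · have h12 := hg₁₂ t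
    rw [key]
    simp only [g, Pi.smul_apply, smul_eq_mul] at h12 ⊢
    linear_combination (f₁ t * L t) * h12
  · rw [key, hμ t]
    simp only [g, hprod, Pi.smul_apply, smul_eq_mul, Matrix.cons_val_zero,
      Matrix.cons_val_one, Matrix.head_cons, Matrix.cons_val_two, Matrix.tail_cons]
    ring
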